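/- Let Λ_c be the conifold algebra and let T : ℂ[z₁,z₂,z₃,z₄] → Λ_c be the ℂ-algebra homomorphism with T(z₁) = ξ₁², T(z₂) = ξ₂², T(z₃) = ½(ξ₁ξ₂+ξ₂ξ₁) + ½(ξ₁ξ₂−ξ₂ξ₁)ξ₃, T(z₄) = ½(ξ₁ξ₂+ξ₂ξ₁) − ½(ξ₁ξ₂−ξ₂ξ₁)ξ₃. Then the kernel of T is exactly the principal ideal generated by z₁z₂ − z₃z₄; hence T induces an injective ℂ-algebra homomorphism τ^♯ from the conifold ring ℂ[z₁,z₂,z₃,z₄]/(z₁z₂−z₃z₄) into Λ_c. -/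

import Mathlib

open MvPolynomial in
/-- Generators of the relations of the conifold algebra `Λ_c`:
`ξ₁²ξ₂ = ξ₂ξ₁²`, `ξ₁ξ₂² = ξ₂²ξ₁`, `ξ₁ξ₃ = −ξ₃ξ₁`, `ξ₂ξ₃ = −ξ₃ξ₂`, `ξ₃² = 1`. -/
inductive ConifoldRel : FreeAlgebra ℂ (Fin 3) → FreeAlgebra ℂ (Fin 3) → Prop
  | r1 : ConifoldRel ((FreeAlgebra.ι ℂ (0 : Fin 3)) ^ 2 * FreeAlgebra.ι ℂ (1 : Fin 3))
      (FreeAlgebra.ι ℂ (1 : Fin 3) * (FreeAlgebra.ι ℂ (0 : Fin 3)) ^ 2)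
  | r2 : ConifoldRel (FreeAlgebra.ι ℂ (0 : Fin 3) * (FreeAlgebra.ι ℂ (1 : Fin 3)) ^ 2)
      ((FreeAlgebra.ι ℂ (1 : Fin 3)) ^ 2 * FreeAlgebra.ι ℂ (0 : Fin 3))
  | r3 : ConifoldRel (FreeAlgebra.ι ℂ (0 : Fin 3) * FreeAlgebra.ι ℂ (2 : Fin 3))
      (-(FreeAlgebra.ι ℂ (2 : Fin 3) * FreeAlgebra.ι ℂ (0 : Fin 3)))
  | r4 : ConifoldRel (FreeAlgebra.ι ℂ (1 : Fin 3) * FreeAlgebra.ι ℂ (2 : Fin 3))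
      (-(FreeAlgebra.ι ℂ (2 : Fin 3) * FreeAlgebra.ι ℂ (1 : Fin 3)))
  | r5 : ConifoldRel ((FreeAlgebra.ι ℂ (2 : Fin 3)) ^ 2) 1

/-- The conifold algebra `Λ_c = ℂ⟨ξ₁,ξ₂,ξ₃⟩/(relations)`. -/
abbrev ConifoldAlgebra : Type := RingQuot ConifoldRel

/-- The generators `ξ₁, ξ₂, ξ₃` of the conifold algebra. -/
noncomputable def cxi (i : Fin 3) : ConifoldAlgebra :=
  RingQuot.mkAlgHom ℂ ConifoldRel (FreeAlgebra.ι ℂ i)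

/-- The image `τ^♯(z₃) = ½(ξ₁ξ₂+ξ₂ξ₁) + ½(ξ₁ξ₂−ξ₂ξ₁)ξ₃` in `Λ_c`. -/
noncomputable def tauZ : Fin 4 → ConifoldAlgebra :=
  ![cxi 0 ^ 2, cxi 1 ^ 2,
    (1 / 2 : ℂ) • (cxi 0 * cxi 1 + cxi 1 * cxi 0) +
      (1 / 2 : ℂ) • ((cxi 0 * cxi 1 - cxi 1 * cxi 0) * cxi 2),
    (1 / 2 : ℂ) • (cxi 0 * cxi 1 + cxi 1 * cxi 0) -
      (1 / 2 : ℂ) • ((cxi 0 * cxi 1 - cxi 1 * cxi 0) * cxi 2)]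


open MvPolynomial

noncomputable section

abbrev R4 : Type := MvPolynomial (Fin 4) ℂ

/-- The monomial substitution `z₁↦ab, z₂↦cd, z₃↦ad, z₄↦bc`. -/
def sigm : R4 →ₐ[ℂ] R4 :=
  aeval ![X 0 * X 1, X 2 * X 3, X 0 * X 3, X 1 * X 2]

def mexp (a b c d : ℕ) : Fin 4 →₀ ℕ := Finsupp.equivFunOnFinite.symm ![a, b, c, d]

@[simp] lemma mexp_apply_0 (a b c d : ℕ) : mexp a b c d 0 = a := rfl
@[simp] lemma mexp_apply_1 (a b c d : ℕ) : mexp a b c d 1 = b := rfl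
@[simp] lemma mexp_apply_2 (a b c d : ℕ) : mexp a b c d 2 = c := rfl
@[simp] lemma mexp_apply_3 (a b c d : ℕ) : mexp a b c d 3 = d := rfl

lemma eq_mexp (u : Fin 4 →₀ ℕ) : u = mexp (u 0) (u 1) (u 2) (u 3) := by
  ext i
  fin_cases i <;> simp [mexp]

lemma monomial_mexp (a b c d : ℕ) (k : ℂ) :
    (monomial (mexp a b c d) k : R4) = C k * X 0 ^ a * X 1 ^ b * X 2 ^ c * X 3 ^ d := by
  rw [monomial_eq, Finsupp.prod_fintype _ _ (fun i => pow_zero _), Fin.prod_univ_four]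
  simp [mul_assoc]

lemma mexp_inj {a b c d a' b' c' d' : ℕ} (h : mexp a b c d = mexp a' b' c' d') :
    a = a' ∧ b = b' ∧ c = c' ∧ d = d' := by
  refine ⟨?_, ?_, ?_, ?_⟩
  · simpa using DFunLike.congr_fun h 0
  · simpa using DFunLike.congr_fun h 1
  · simpa using DFunLike.congr_fun h 2
  · simpa using DFunLike.congr_fun h 3

lemma sigm_monomial (a b c d : ℕ) (k : ℂ) :
    sigm (monomial (mexp a b c d) k) = monomial (mexp (a + c) (a + d) (b + d) (b + c)) k := by
  rw [monomial_mexp, monomial_mexp]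
  simp only [sigm, map_mul, map_pow, aeval_X, aeval_C]
  simp only [Matrix.cons_val_zero, Matrix.cons_val_one, Matrix.head_cons,
    Matrix.cons_val_two, Matrix.tail_cons, Matrix.cons_val_three]
  rw [algebraMap_eq]
  ring

/-- `Good p` : no monomial of `p` contains both `z₁` and `z₂`. -/
def Good (p : R4) : Prop := ∀ m ∈ p.support, m 0 = 0 ∨ m 1 = 0

lemma sigm_good_monomial (u : Fin 4 →₀ ℕ) (k : ℂ) :
    sigm (monomial u k) = monomial (mexp (u 0 + u 2) (u 0 + u 3) (u 1 + u 3) (u 1 + u 2)) k := by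
  conv_lhs => rw [eq_mexp u]
  rw [sigm_monomial]

lemma good_exp_inj {u v : Fin 4 →₀ ℕ} (hu : u 0 = 0 ∨ u 1 = 0) (hv : v 0 = 0 ∨ v 1 = 0)
    (h : mexp (u 0 + u 2) (u 0 + u 3) (u 1 + u 3) (u 1 + u 2)
       = mexp (v 0 + v 2) (v 0 + v 3) (v 1 + v 3) (v 1 + v 2)) : u = v := by
  obtain ⟨h1, h2, h3, h4⟩ := mexp_inj h
  rw [eq_mexp u, eq_mexp v]
  have e0 : u 0 = v 0 := by omega
  have e1 : u 1 = v 1 := by omega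
  have e2 : u 2 = v 2 := by omega
  have e3 : u 3 = v 3 := by omega
  rw [e0, e1, e2, e3]

lemma good_inj (p : R4) (hp : Good p) (h : sigm p = 0) : p = 0 := by
  by_contra hne
  obtain ⟨u, hu⟩ := Finset.nonempty_of_ne_empty (by simpa [MvPolynomial.support_eq_empty] using hne :
    p.support ≠ ∅)
  have key : coeff (mexp (u 0 + u 2) (u 0 + u 3) (u 1 + u 3) (u 1 + u 2)) (sigm p)
      = coeff u p := by
    conv_lhs => rw [← support_sum_monomial_coeff p]
    rw [map_sum]
    rw [Finset.sum_congr rfl (fun v _ => sigm_good_monomial v (coeff v p))]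
    rw [coeff_sum]
    rw [Finset.sum_eq_single u]
    · rw [coeff_monomial, if_pos rfl]
    · intro v hv hvu
      rw [coeff_monomial, if_neg]
      intro he
      exact hvu (good_exp_inj (hp v hv) (hp u hu) he)
    · intro habs; exact absurd hu habs
  rw [h] at key
  simp only [coeff_zero] at key
  exact (mem_support_iff.mp hu) key.symm

end

noncomputable section
open MvPolynomial

abbrev Icon : Ideal R4 := Ideal.span {(X 0 * X 1 - X 2 * X 3 : R4)}

lemma good_monomial_of_left (u : Fin 4 →₀ ℕ) (k : ℂ) (h : u 0 = 0 ∨ u 1 = 0) :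
    Good (monomial u k) := by
  intro m hm
  rw [support_monomial] at hm
  split at hm
  · simp at hm
  · simp only [Finset.mem_singleton] at hm
    subst hm; exact h

lemma mexp_key (a b c d : ℕ) (k : ℂ) :
    (monomial (mexp (a + 1) (b + 1) c d) k : R4)
      - monomial (mexp a b (c + 1) (d + 1)) k
      = (X 0 * X 1 - X 2 * X 3) * monomial (mexp a b c d) k := by
  rw [monomial_mexp, monomial_mexp, monomial_mexp]
  ring

lemma normal_form_monomial : ∀ a b c d : ℕ, ∀ k : ℂ,
    ∃ g : R4, Good g ∧ (monomial (mexp a b c d) k : R4) - g ∈ Icon := by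
  intro a
  induction a with
  | zero =>
    intro b c d k
    exact ⟨monomial (mexp 0 b c d) k, good_monomial_of_left _ _ (Or.inl rfl),
      by simp⟩
  | succ a ih =>
    intro b c d k
    rcases b with _ | b
    · exact ⟨monomial (mexp (a+1) 0 c d) k, good_monomial_of_left _ _ (Or.inr rfl),
        by simp⟩
    · obtain ⟨g, hg, hmem⟩ := ih b (c+1) (d+1) k
      refine ⟨g, hg, ?_⟩
      have : (monomial (mexp (a + 1) (b + 1) c d) k : R4) - g
          = (X 0 * X 1 - X 2 * X 3) * monomial (mexp a b c d) k
            + (monomial (mexp a b (c+1) (d+1)) k - g) := by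
        rw [← mexp_key]; ring
      rw [this]
      exact Ideal.add_mem _ (Ideal.mul_mem_right _ _
        (Ideal.subset_span (Set.mem_singleton _))) hmem

lemma normal_form (p : R4) : ∃ g : R4, Good g ∧ p - g ∈ Icon := by
  induction p using MvPolynomial.induction_on' with
  | monomial u k =>
    rw [eq_mexp u]
    exact normal_form_monomial _ _ _ _ k
  | add p q hp hq =>
    obtain ⟨g₁, hg₁, hm₁⟩ := hp
    obtain ⟨g₂, hg₂, hm₂⟩ := hq
    refine ⟨g₁ + g₂, ?_, ?_⟩
    · intro m hm
      classical
      rcases Finset.mem_union.mp (Finsupp.support_add hm) with h | h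
      · exact hg₁ m h
      · exact hg₂ m h
    · have : p + q - (g₁ + g₂) = (p - g₁) + (q - g₂) := by ring
      rw [this]
      exact Ideal.add_mem _ hm₁ hm₂

lemma sigm_gen : sigm (X 0 * X 1 - X 2 * X 3) = 0 := by
  simp only [sigm, map_sub, map_mul, aeval_X]
  simp only [Matrix.cons_val_zero, Matrix.cons_val_one, Matrix.head_cons,
    Matrix.cons_val_two, Matrix.tail_cons, Matrix.cons_val_three]
  ring

lemma ker_sigm : RingHom.ker (sigm : R4 →ₐ[ℂ] R4) = Icon := by
  apply le_antisymm
  · intro p hp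
    rw [RingHom.mem_ker] at hp
    obtain ⟨g, hg, hmem⟩ := normal_form p
    have hsg : sigm g = 0 := by
      have h2 : sigm (p - g) = 0 := by
        refine Submodule.span_induction ?_ ?_ ?_ ?_ hmem
        · rintro x (rfl : x = _); exact sigm_gen
        · simp
        · intro x y _ _ hx hy; rw [map_add, hx, hy, add_zero]
        · intro r x _ hx
          rw [smul_eq_mul, map_mul, hx, mul_zero]
      rw [map_sub, hp, zero_sub, neg_eq_zero] at h2
      exact h2
    have : g = 0 := good_inj g hg hsg
    rw [this, sub_zero] at hmem
    exact hmem
  · rw [Ideal.span_le]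
    rintro x (rfl : x = _)
    rw [SetLike.mem_coe, RingHom.mem_ker]
    exact sigm_gen

end

noncomputable section
open MvPolynomial

abbrev M2 : Type := Matrix (Fin 2) (Fin 2) R4

/-- Matrices for the generators: `ξ₁ ↦ [[0,a],[b,0]]`, `ξ₂ ↦ [[0,c],[d,0]]`, `ξ₃ ↦ [[1,0],[0,-1]]`. -/
def genM : Fin 3 → M2 :=
  ![!![0, X 0; X 1, 0], !![0, X 2; X 3, 0], !![1, 0; 0, -1]]

lemma genM_rel : ∀ ⦃x y : FreeAlgebra ℂ (Fin 3)⦄, ConifoldRel x y →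
    FreeAlgebra.lift ℂ genM x = FreeAlgebra.lift ℂ genM y := by
  intro x y h
  induction h with
  | r1 => simp only [map_mul, map_pow, FreeAlgebra.lift_ι_apply, genM, pow_two,
      Matrix.cons_val_zero, Matrix.cons_val_one, Matrix.head_cons, Matrix.mul_fin_two]
          norm_num [mul_comm]
  | r2 => simp only [map_mul, map_pow, FreeAlgebra.lift_ι_apply, genM, pow_two,
      Matrix.cons_val_zero, Matrix.cons_val_one, Matrix.head_cons, Matrix.mul_fin_two]
          norm_num [mul_comm]
  | r3 => simp only [map_mul, map_neg, FreeAlgebra.lift_ι_apply, genM,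
      Matrix.cons_val_zero, Matrix.cons_val_one, Matrix.head_cons, Matrix.cons_val_two,
      Matrix.tail_cons, Matrix.mul_fin_two]
          norm_num
  | r4 => simp only [map_mul, map_neg, FreeAlgebra.lift_ι_apply, genM,
      Matrix.cons_val_zero, Matrix.cons_val_one, Matrix.head_cons, Matrix.cons_val_two,
      Matrix.tail_cons, Matrix.mul_fin_two]
          norm_num
  | r5 => simp only [map_pow, map_one, FreeAlgebra.lift_ι_apply, genM, pow_two,
      Matrix.cons_val_two, Matrix.tail_cons, Matrix.head_cons, Matrix.mul_fin_two]
          norm_num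
          rw [Matrix.one_fin_two]
          simp [Matrix.mul_fin_two]

/-- The matrix representation `φ : Λ_c → M₂(ℂ[a,b,c,d])`. -/
def phiM : ConifoldAlgebra →ₐ[ℂ] M2 :=
  RingQuot.liftAlgHom ℂ ⟨FreeAlgebra.lift ℂ genM, genM_rel⟩

lemma phiM_cxi (i : Fin 3) : phiM (cxi i) = genM i := by
  rw [cxi, phiM, RingQuot.liftAlgHom_mkAlgHom_apply, FreeAlgebra.lift_ι_apply]

lemma algebraMap_M2_eq (r : R4) :
    algebraMap R4 M2 r = !![r, 0; 0, r] := by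
  rw [Matrix.algebraMap_eq_diagonal]
  ext i j
  fin_cases i <;> fin_cases j <;> simp [Matrix.diagonal]


section
set_option maxHeartbeats 1000000 in
lemma phiM_tauZ_lit :
    phiM (tauZ 0) = algebraMap R4 M2 (sigm (X 0)) ∧
    phiM (tauZ 1) = algebraMap R4 M2 (sigm (X 1)) ∧
    phiM (tauZ 2) = algebraMap R4 M2 (sigm (X 2)) ∧
    phiM (tauZ 3) = algebraMap R4 M2 (sigm (X 3)) := by
  have h0 : phiM (cxi 0) = !![0, X 0; X 1, 0] := phiM_cxi 0
  have h1 : phiM (cxi 1) = !![0, X 2; X 3, 0] := phiM_cxi 1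
  have h2 : phiM (cxi 2) = !![1, 0; 0, -1] := phiM_cxi 2
  refine ⟨?_, ?_, ?_, ?_⟩ <;>
  · simp only [tauZ, sigm, aeval_X, Matrix.cons_val_zero, Matrix.cons_val_one,
      Matrix.head_cons, Matrix.cons_val_two, Matrix.tail_cons, Matrix.cons_val_three,
      map_add, map_sub, map_mul, map_pow, map_smul]
    simp only [h0, h1, h2]
    simp only [algebraMap_M2_eq]
    ext r s
    fin_cases r <;> fin_cases s <;>
      simp [Matrix.mul_apply, Fin.sum_univ_two, MvPolynomial.smul_eq_C_mul, pow_two] <;> ring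

lemma phiM_tauZ (i : Fin 4) : phiM (tauZ i) = algebraMap R4 M2 (sigm (X i)) := by
  fin_cases i
  · exact phiM_tauZ_lit.1
  · exact phiM_tauZ_lit.2.1
  · exact phiM_tauZ_lit.2.2.1
  · exact phiM_tauZ_lit.2.2.2
end

section ConifCalc
variable {A : Type*} [Ring A] [Algebra ℂ A]

lemma conif_calc (a b c : A)
    (h1 : a ^ 2 * b = b * a ^ 2) (h2 : a * b ^ 2 = b ^ 2 * a)
    (h3 : a * c = -(c * a)) (h4 : b * c = -(c * b)) (h5 : c ^ 2 = 1) :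
    ((1 / 2 : ℂ) • (a * b + b * a) + (1 / 2 : ℂ) • ((a * b - b * a) * c)) *
      ((1 / 2 : ℂ) • (a * b + b * a) - (1 / 2 : ℂ) • ((a * b - b * a) * c))
      = a ^ 2 * b ^ 2 := by
  have h1' : (a * a) * b = b * (a * a) := by simpa [pow_two] using h1
  have h2' : a * (b * b) = (b * b) * a := by simpa [pow_two] using h2
  have hcc : c * c = 1 := by simpa [pow_two] using h5
  have habc : a * b * c = c * (a * b) := by
    calc a * b * c = a * (b * c) := by rw [mul_assoc]
      _ = a * (-(c * b)) := by rw [h4]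
      _ = -(a * c * b) := by rw [mul_neg, mul_assoc]
      _ = -(-(c * a) * b) := by rw [h3]
      _ = c * (a * b) := by rw [neg_mul, neg_neg, mul_assoc]
  have hbac : b * a * c = c * (b * a) := by
    calc b * a * c = b * (a * c) := by rw [mul_assoc]
      _ = b * (-(c * a)) := by rw [h3]
      _ = -(b * c * a) := by rw [mul_neg, mul_assoc]
      _ = -(-(c * b) * a) := by rw [h4]
      _ = c * (b * a) := by rw [neg_mul, neg_neg, mul_assoc]
  set u := a * b + b * a with hu
  set v := a * b - b * a with hv
  have hcu : u * c = c * u := by rw [hu, add_mul, habc, hbac, mul_add]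
  have hcv : v * c = c * v := by rw [hv, sub_mul, habc, hbac, mul_sub]
  have hP : (a * b) * (b * a) = (b * b) * (a * a) := by
    calc (a * b) * (b * a) = (a * (b * b)) * a := by noncomm_ring
      _ = ((b * b) * a) * a := by rw [h2']
      _ = (b * b) * (a * a) := by noncomm_ring
  have hQ : (b * a) * (a * b) = (a * a) * (b * b) := by
    calc (b * a) * (a * b) = (b * (a * a)) * b := by noncomm_ring
      _ = ((a * a) * b) * b := by rw [← h1']
      _ = (a * a) * (b * b) := by noncomm_ring
  have hAB : (a * a) * (b * b) = (b * b) * (a * a) := by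
    calc (a * a) * (b * b) = a * (a * (b * b)) := by noncomm_ring
      _ = a * ((b * b) * a) := by rw [h2']
      _ = (a * (b * b)) * a := by noncomm_ring
      _ = ((b * b) * a) * a := by rw [h2']
      _ = (b * b) * (a * a) := by noncomm_ring
  have huv : u * v = v * u := by
    have e1 : u * v = (a*b)*(a*b) + (b*a)*(a*b) - (a*b)*(b*a) - (b*a)*(b*a) := by
      rw [hu, hv]; noncomm_ring
    have e2 : v * u = (a*b)*(a*b) + (a*b)*(b*a) - (b*a)*(a*b) - (b*a)*(b*a) := by
      rw [hu, hv]; noncomm_ring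
    rw [e1, e2, hP, hQ, hAB]
  set w := v * c with hw
  have s2 : w * u = u * w := by
    calc w * u = v * (c * u) := by rw [hw, mul_assoc]
      _ = v * (u * c) := by rw [← hcu]
      _ = (v * u) * c := by rw [mul_assoc]
      _ = (u * v) * c := by rw [huv]
      _ = u * w := by rw [hw, mul_assoc]
  have s3 : w * w = v * v := by
    calc w * w = v * ((c * v) * c) := by rw [hw]; noncomm_ring
      _ = v * ((v * c) * c) := by rw [← hcv]
      _ = v * (v * (c * c)) := by rw [mul_assoc]
      _ = v * v := by rw [hcc, mul_one]
  have key : (u + w) * (u - w) = u * u - v * v := by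
    have s1 : (u + w) * (u - w) = u * u - (u * w - w * u) - w * w := by noncomm_ring
    rw [s1, s2, sub_self, sub_zero, s3]
  have e3 : u * u - v * v
      = ((a*b)*(b*a) + (a*b)*(b*a)) + ((b*a)*(a*b) + (b*a)*(a*b)) := by
    rw [hu, hv]; noncomm_ring
  have e4 : u * u - v * v = ((b*b)*(a*a) + (b*b)*(a*a)) + ((b*b)*(a*a) + (b*b)*(a*a)) := by
    rw [e3, hP, hQ, hAB]
  have lhs_eq : ((1 / 2 : ℂ) • u + (1 / 2 : ℂ) • w) * ((1 / 2 : ℂ) • u - (1 / 2 : ℂ) • w)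
      = (1 / 2 : ℂ) • ((1 / 2 : ℂ) • ((u + w) * (u - w))) := by
    rw [← smul_add, ← smul_sub, smul_mul_assoc, mul_smul_comm]
  rw [lhs_eq, key, e4, pow_two, pow_two, ← hAB]
  module

end ConifCalc

lemma cxi_r1 : cxi 0 ^ 2 * cxi 1 = cxi 1 * cxi 0 ^ 2 := by
  simpa only [map_mul, map_pow, cxi] using RingQuot.mkAlgHom_rel ℂ ConifoldRel.r1

lemma cxi_r2 : cxi 0 * cxi 1 ^ 2 = cxi 1 ^ 2 * cxi 0 := by
  simpa only [map_mul, map_pow, cxi] using RingQuot.mkAlgHom_rel ℂ ConifoldRel.r2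

lemma cxi_r3 : cxi 0 * cxi 2 = -(cxi 2 * cxi 0) := by
  simpa only [map_mul, map_neg, cxi] using RingQuot.mkAlgHom_rel ℂ ConifoldRel.r3

lemma cxi_r4 : cxi 1 * cxi 2 = -(cxi 2 * cxi 1) := by
  simpa only [map_mul, map_neg, cxi] using RingQuot.mkAlgHom_rel ℂ ConifoldRel.r4

lemma cxi_r5 : cxi 2 ^ 2 = 1 := by
  simpa only [map_pow, map_one, cxi] using RingQuot.mkAlgHom_rel ℂ ConifoldRel.r5

lemma tauZ_rel : tauZ 0 * tauZ 1 = tauZ 2 * tauZ 3 := by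
  have h := conif_calc (cxi 0) (cxi 1) (cxi 2) cxi_r1 cxi_r2 cxi_r3 cxi_r4 cxi_r5
  show (![cxi 0 ^ 2, cxi 1 ^ 2, _, _] 0) * _ = _
  simp only [tauZ, Matrix.cons_val_zero, Matrix.cons_val_one, Matrix.head_cons,
    Matrix.cons_val_two, Matrix.tail_cons, Matrix.cons_val_three]
  exact h.symm

lemma algebraMap_M2_injective : Function.Injective (algebraMap R4 M2) := by
  intro x y h
  have := congrArg (fun M : M2 => M 0 0) h
  simpa [algebraMap_M2_eq] using this

open MvPolynomial in
theorem conifold_ring_embeds_in_conifold_algebra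
    (T : MvPolynomial (Fin 4) ℂ →ₐ[ℂ] ConifoldAlgebra)
    (hT : ∀ i : Fin 4, T (X i) = tauZ i) :
    RingHom.ker T =
      Ideal.span {(X 0 * X 1 - X 2 * X 3 : MvPolynomial (Fin 4) ℂ)} ∧
    ∃ τ : (MvPolynomial (Fin 4) ℂ ⧸
        Ideal.span {(X 0 * X 1 - X 2 * X 3 : MvPolynomial (Fin 4) ℂ)}) →ₐ[ℂ]
        ConifoldAlgebra,
      Function.Injective τ ∧
      ∀ q : MvPolynomial (Fin 4) ℂ,
        τ (Ideal.Quotient.mk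
          (Ideal.span {(X 0 * X 1 - X 2 * X 3 : MvPolynomial (Fin 4) ℂ)}) q) = T q := by
  have hcomp : ∀ p : MvPolynomial (Fin 4) ℂ, phiM (T p) = algebraMap R4 M2 (sigm p) := by
    have h : phiM.comp T = (IsScalarTower.toAlgHom ℂ R4 M2).comp sigm := by
      apply MvPolynomial.algHom_ext
      intro i
      simp only [AlgHom.comp_apply, hT, IsScalarTower.coe_toAlgHom']
      exact phiM_tauZ i
    intro p
    have := congrArg (fun f : MvPolynomial (Fin 4) ℂ →ₐ[ℂ] M2 => f p) h
    simpa using this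
  have hker : RingHom.ker T = Icon := by
    apply le_antisymm
    · intro p hp
      rw [RingHom.mem_ker] at hp
      have h1 : algebraMap R4 M2 (sigm p) = 0 := by
        rw [← hcomp, hp, map_zero]
      have h2 : sigm p = 0 := by
        apply algebraMap_M2_injective
        rw [h1, map_zero]
      rw [← ker_sigm]
      exact h2
    · rw [Ideal.span_le]
      rintro x (rfl : x = _)
      rw [SetLike.mem_coe, RingHom.mem_ker, map_sub, map_mul, map_mul, hT, hT, hT, hT,
        tauZ_rel, sub_self]
  refine ⟨hker, ?_⟩
  have hzero : ∀ a ∈ Icon, T a = 0 := by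
    intro a ha
    rw [← RingHom.mem_ker, hker] at *
    exact ha
  refine ⟨Ideal.Quotient.liftₐ Icon T hzero, ?_, ?_⟩
  · intro x y hxy
    obtain ⟨p, rfl⟩ := Ideal.Quotient.mk_surjective x
    obtain ⟨q, rfl⟩ := Ideal.Quotient.mk_surjective y
    rw [Ideal.Quotient.liftₐ_apply, Ideal.Quotient.liftₐ_apply] at hxy
    change T p = T q at hxy
    rw [Ideal.Quotient.eq]
    show p - q ∈ Icon
    rw [← hker, RingHom.mem_ker, map_sub, sub_eq_zero]
    exact hxy
  · intro q
    rw [Ideal.Quotient.liftₐ_apply]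
    rfl
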